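/- Let p ≥ 2, β > 0, h > 0 be fixed, and for each p let q_p ∈ [0,1] be the unique solution of q = E[tanh²(β(p/2)^{1/2} q^{(p−1)/2} Y + h)] (assuming condition (H) holds for each p so that the solution exists uniquely). Then lim_{p→∞} q_p = tanh²(h). -/

import Mathlib

open MeasureTheory ProbabilityTheory Real

lemma aux_hasDerivAt_tanh (x : ℝ) : HasDerivAt Real.tanh (1 / Real.cosh x ^ 2) x := by
  have h := (Real.hasDerivAt_sinh x).div (Real.hasDerivAt_cosh x) (Real.cosh_pos x).ne'
  have he : (Real.cosh x * Real.cosh x - Real.sinh x * Real.sinh x) / Real.cosh x ^ 2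
      = 1 / Real.cosh x ^ 2 := by
    have h1 := Real.cosh_sq_sub_sinh_sq x
    have h2 : Real.cosh x * Real.cosh x - Real.sinh x * Real.sinh x = 1 := by nlinarith
    rw [h2]
  rw [he] at h
  rw [show Real.tanh = Real.sinh / Real.cosh from funext fun y => Real.tanh_eq_sinh_div_cosh y]
  exact h

lemma aux_abs_tanh_lt_one (x : ℝ) : |Real.tanh x| < 1 := by
  rw [Real.tanh_eq_sinh_div_cosh, abs_div, abs_of_pos (Real.cosh_pos x),
    div_lt_one (Real.cosh_pos x)]
  nlinarith [Real.cosh_sq_sub_sinh_sq x, abs_nonneg (Real.sinh x), sq_abs (Real.sinh x),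
    Real.cosh_pos x]

lemma aux_tanh_lip : LipschitzWith 1 Real.tanh := by
  apply lipschitzWith_of_nnnorm_deriv_le (fun x => (aux_hasDerivAt_tanh x).differentiableAt)
  intro x
  rw [(aux_hasDerivAt_tanh x).deriv, ← NNReal.coe_le_coe, coe_nnnorm, NNReal.coe_one,
    Real.norm_eq_abs, abs_of_pos (by positivity), div_le_one (by positivity)]
  nlinarith [Real.one_le_cosh x]

lemma aux_sq_tanh_diff (u v : ℝ) : |Real.tanh u ^ 2 - Real.tanh v ^ 2| ≤ 2 * |u - v| := by
  have h1 : |Real.tanh u - Real.tanh v| ≤ |u - v| := by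
    have := aux_tanh_lip.dist_le_mul u v
    simpa [Real.dist_eq] using this
  have h2 := (aux_abs_tanh_lt_one u).le
  have h3 := (aux_abs_tanh_lt_one v).le
  have key : |Real.tanh u ^ 2 - Real.tanh v ^ 2|
      = |Real.tanh u - Real.tanh v| * |Real.tanh u + Real.tanh v| := by
    rw [← abs_mul]; ring_nf
  rw [key]
  have h4 : |Real.tanh u + Real.tanh v| ≤ 2 := by
    calc |Real.tanh u + Real.tanh v| ≤ |Real.tanh u| + |Real.tanh v| := abs_add_le _ _
    _ ≤ 2 := by linarith
  calc |Real.tanh u - Real.tanh v| * |Real.tanh u + Real.tanh v|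
      ≤ |u - v| * 2 := mul_le_mul h1 h4 (abs_nonneg _) (abs_nonneg _)
  _ = 2 * |u - v| := by ring

lemma aux_integrable_abs : Integrable (fun y : ℝ => |y|) (gaussianReal 0 1) := by
  rw [gaussianReal_of_var_ne_zero 0 one_ne_zero,
    integrable_withDensity_iff (measurable_gaussianPDF 0 1)
      (ae_of_all _ fun x => ENNReal.ofReal_lt_top)]
  have h := ((integrable_mul_exp_neg_mul_sq (b := (1:ℝ)/2) (by norm_num)).abs).const_mul
    ((Real.sqrt (2 * Real.pi))⁻¹)
  refine h.congr (ae_of_all _ fun x => ?_)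
  show _ = |x| * (gaussianPDF 0 1 x).toReal
  rw [show (gaussianPDF 0 1 x).toReal = gaussianPDFReal 0 1 x from
    ENNReal.toReal_ofReal (gaussianPDFReal_nonneg _ _ _)]
  simp only [gaussianPDFReal, NNReal.coe_one, mul_one, sub_zero, abs_mul,
    abs_of_pos (Real.exp_pos _)]
  rw [show -(1/2 : ℝ) * x ^ 2 = -x ^ 2 / 2 by ring]
  ring

lemma aux_int_bound (c h : ℝ) :
    |(∫ y, Real.tanh (c * y + h) ^ 2 ∂(gaussianReal 0 1)) - Real.tanh h ^ 2|
      ≤ 2 * |c| * ∫ y, |y| ∂(gaussianReal 0 1) := by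
  have hcont : Continuous fun y : ℝ => Real.tanh (c * y + h) ^ 2 :=
    (aux_tanh_lip.continuous.comp (by continuity)).pow 2
  have hint : Integrable (fun y : ℝ => Real.tanh (c * y + h) ^ 2) (gaussianReal 0 1) := by
    refine (integrable_const (1:ℝ)).mono' hcont.aestronglyMeasurable (ae_of_all _ fun y => ?_)
    rw [Real.norm_eq_abs, abs_of_nonneg (sq_nonneg _), ← sq_abs]
    nlinarith [aux_abs_tanh_lt_one (c * y + h), abs_nonneg (Real.tanh (c * y + h))]
  have hconst : (∫ _ : ℝ, Real.tanh h ^ 2 ∂(gaussianReal 0 1)) = Real.tanh h ^ 2 := by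
    simp [integral_const]
  rw [← hconst, ← integral_sub hint (integrable_const _)]
  have h1 : |∫ y, (Real.tanh (c * y + h) ^ 2 - Real.tanh h ^ 2) ∂(gaussianReal 0 1)|
      ≤ ∫ y, |Real.tanh (c * y + h) ^ 2 - Real.tanh h ^ 2| ∂(gaussianReal 0 1) := by
    simpa [Real.norm_eq_abs] using norm_integral_le_integral_norm (μ := gaussianReal 0 1)
      (f := fun y => Real.tanh (c * y + h) ^ 2 - Real.tanh h ^ 2)
  refine h1.trans ?_
  have h2 : ∫ y, |Real.tanh (c * y + h) ^ 2 - Real.tanh h ^ 2| ∂(gaussianReal 0 1)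
      ≤ ∫ y, 2 * |c| * |y| ∂(gaussianReal 0 1) := by
    refine integral_mono (hint.sub (integrable_const _)).abs
      (aux_integrable_abs.const_mul (2 * |c|)) fun y => ?_
    have h3 := aux_sq_tanh_diff (c * y + h) h
    simpa [add_sub_cancel_right, abs_mul, mul_assoc] using h3
  exact h2.trans (integral_const_mul _ _).le

lemma aux_contOn (c e h : ℝ) (he : 0 < e) :
    ContinuousOn (fun x : ℝ => ∫ y, Real.tanh (c * x ^ e * y + h) ^ 2 ∂(gaussianReal 0 1))
      (Set.Icc 0 1) := by
  apply continuousOn_of_dominated (bound := fun _ => (1:ℝ))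
  · intro x _
    exact ((aux_tanh_lip.continuous.comp (by continuity)).pow 2).aestronglyMeasurable
  · intro x _
    refine ae_of_all _ fun y => ?_
    rw [Real.norm_eq_abs, abs_of_nonneg (sq_nonneg _), ← sq_abs]
    nlinarith [aux_abs_tanh_lt_one (c * x ^ e * y + h),
      abs_nonneg (Real.tanh (c * x ^ e * y + h))]
  · exact integrable_const 1
  · refine ae_of_all _ fun y x hx => ?_
    have hx' : ContinuousAt (fun x : ℝ => x ^ e) x :=
      Real.continuousAt_rpow_const x e (Or.inr he.le)
    have hinner : ContinuousAt (fun x : ℝ => c * x ^ e * y + h) x :=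
      (((continuousAt_const.mul hx').mul continuousAt_const).add continuousAt_const)
    exact ((aux_tanh_lip.continuous.continuousAt.comp hinner).pow 2).continuousWithinAt

theorem stmt_7 (β h : ℝ) (hβ : 0 < β) (hh : 0 < h) (q : ℕ → ℝ)
    (hq : ∀ p : ℕ, 2 ≤ p → q p ∈ Set.Icc (0 : ℝ) 1 ∧
      q p = ∫ y, Real.tanh (β * Real.sqrt ((p : ℝ) / 2) * (q p) ^ (((p : ℝ) - 1) / 2) * y + h) ^ 2
              ∂(gaussianReal 0 1))
    (huniq : ∀ p : ℕ, 2 ≤ p → ∀ q' ∈ Set.Icc (0 : ℝ) 1,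
      q' = (∫ y, Real.tanh (β * Real.sqrt ((p : ℝ) / 2) * q' ^ (((p : ℝ) - 1) / 2) * y + h) ^ 2
              ∂(gaussianReal 0 1)) → q' = q p) :
    Filter.Tendsto q Filter.atTop (nhds (Real.tanh h ^ 2)) := by
  set t := Real.tanh h ^ 2 with ht
  have hth : 0 < Real.tanh h := by
    rw [Real.tanh_eq_sinh_div_cosh]
    exact div_pos (Real.sinh_pos_iff.2 hh) (Real.cosh_pos h)
  have ht0 : 0 < t := pow_pos hth 2
  have ht1 : t < 1 := by
    nlinarith [aux_abs_tanh_lt_one h, abs_nonneg (Real.tanh h), sq_abs (Real.tanh h)]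
  set a := (1 + t) / 2 with ha
  have hta : t < a := by rw [ha]; linarith
  have ha1 : a < 1 := by rw [ha]; linarith
  have ha0 : 0 < a := by rw [ha]; linarith
  set M := ∫ y, |y| ∂(gaussianReal 0 1) with hM
  have hM0 : 0 ≤ M := integral_nonneg fun y => abs_nonneg y
  set r := a ^ ((1:ℝ)/2) with hr
  have hr0 : 0 < r := Real.rpow_pos_of_pos ha0 _
  have hr1 : r < 1 := Real.rpow_lt_one ha0.le ha1 (by norm_num)
  set S : ℕ → ℝ := fun p => Real.sqrt ((p:ℝ)/2) * a ^ (((p:ℝ)-1)/2) with hS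
  have hSnonneg : ∀ p, 0 ≤ S p := fun p =>
    mul_nonneg (Real.sqrt_nonneg _) (Real.rpow_nonneg ha0.le _)
  -- S p ≤ (p * r^p) / r for p ≥ 1
  have hSle : ∀ p : ℕ, 1 ≤ p → S p ≤ ((p:ℝ) * r ^ p) / r := by
    intro p hp
    have hp1 : (1:ℝ) ≤ (p:ℝ) := by exact_mod_cast hp
    have hrw : a ^ (((p:ℝ)-1)/2) = r ^ (p - 1) := by
      have h1 : ((p:ℝ)-1)/2 = (1/2 : ℝ) * (((p - 1 : ℕ)):ℝ) := by
        rw [Nat.cast_sub hp]; push_cast; ring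
      rw [h1, Real.rpow_mul ha0.le, ← hr, Real.rpow_natCast]
    have hsqrt : Real.sqrt ((p:ℝ)/2) ≤ (p:ℝ) := by
      calc Real.sqrt ((p:ℝ)/2) ≤ Real.sqrt ((p:ℝ)^2) :=
            Real.sqrt_le_sqrt (by nlinarith)
      _ = (p:ℝ) := Real.sqrt_sq (by positivity)
    have hrp : r ^ p = r ^ (p - 1) * r := by
      rw [← pow_succ]; congr 1; omega
    have : S p ≤ (p:ℝ) * r ^ (p - 1) := by
      rw [hS]; simp only []
      rw [hrw]
      exact mul_le_mul_of_nonneg_right hsqrt (pow_nonneg hr0.le _)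
    refine this.trans (le_of_eq ?_)
    rw [hrp]
    field_simp
  have hStend : Filter.Tendsto S Filter.atTop (nhds 0) := by
    have hsum : Summable (fun n : ℕ => ((n:ℝ)^1) * r ^ n) :=
      summable_pow_mul_geometric_of_norm_lt_one 1
        (by rw [Real.norm_eq_abs, abs_of_pos hr0]; exact hr1)
    have h0 : Filter.Tendsto (fun n : ℕ => (n:ℝ) * r ^ n) Filter.atTop (nhds 0) := by
      simpa using hsum.tendsto_atTop_zero
    have hg : Filter.Tendsto (fun p : ℕ => ((p:ℝ) * r ^ p) / r) Filter.atTop (nhds 0) := by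
      simpa using h0.div_const r
    exact squeeze_zero' (Filter.Eventually.of_forall hSnonneg)
      ((Filter.eventually_ge_atTop 1).mono hSle) hg
  set D : ℕ → ℝ := fun p => 2 * β * M * S p with hD
  have hDtend : Filter.Tendsto D Filter.atTop (nhds 0) := by
    have h2 := hStend.const_mul (2 * β * M)
    rw [mul_zero] at h2
    exact h2
  have hDnonneg : ∀ p, 0 ≤ D p := fun p =>
    mul_nonneg (mul_nonneg (by positivity) hM0) (hSnonneg p)
  -- main eventual bound
  have hev : ∀ᶠ p in Filter.atTop, |q p - t| ≤ D p := by
    filter_upwards [Filter.eventually_ge_atTop 2,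
      hDtend.eventually_lt_const (show (0:ℝ) < a - t by linarith)] with p hp2 hpD
    set e := ((p:ℝ)-1)/2 with hedef
    have hp2' : (2:ℝ) ≤ (p:ℝ) := by exact_mod_cast hp2
    have he : 0 < e := by rw [hedef]; linarith
    set c0 := β * Real.sqrt ((p:ℝ)/2) with hc0def
    have hc0 : 0 ≤ c0 := mul_nonneg hβ.le (Real.sqrt_nonneg _)
    set φ : ℝ → ℝ := fun x => ∫ y, Real.tanh (c0 * x ^ e * y + h) ^ 2 ∂(gaussianReal 0 1)
      with hφ
    have hφcont : ContinuousOn φ (Set.Icc 0 1) := aux_contOn c0 e h he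
    have hφ0 : φ 0 = t := by
      rw [hφ]
      simp only [Real.zero_rpow he.ne', mul_zero, zero_mul, zero_add]
      simp [integral_const]
      exact ht.symm
    have hbound : ∀ x : ℝ, 0 ≤ x → |φ x - t| ≤ 2 * (c0 * x ^ e) * M := by
      intro x hx
      have hb := aux_int_bound (c0 * x ^ e) h
      simpa [abs_of_nonneg (mul_nonneg hc0 (Real.rpow_nonneg hx _))] using hb
    have hDp : D p = 2 * (c0 * a ^ e) * M := by
      rw [hD, hS, hc0def, hedef]; ring
    have hφa : φ a < a := by
      have hba := hbound a ha0.le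
      have h2 : φ a - t ≤ D p := by
        rw [hDp]; exact (abs_le.mp hba).2
      linarith
    have hcont' : ContinuousOn (fun x => φ x - x) (Set.Icc 0 a) :=
      (hφcont.mono (Set.Icc_subset_Icc le_rfl ha1.le)).sub continuousOn_id
    have h0mem : (0:ℝ) ∈ Set.Icc (φ a - a) (φ 0 - 0) := by
      constructor
      · linarith
      · rw [hφ0]; linarith
    obtain ⟨x, hxmem, hxeq⟩ := intermediate_value_Icc' ha0.le hcont' h0mem
    have hxeq' : φ x - x = 0 := hxeq
    have hx01 : x ∈ Set.Icc (0:ℝ) 1 := ⟨hxmem.1, hxmem.2.trans ha1.le⟩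
    have hxfix : x = ∫ y, Real.tanh (β * Real.sqrt ((p : ℝ) / 2)
        * x ^ (((p : ℝ) - 1) / 2) * y + h) ^ 2 ∂(gaussianReal 0 1) := by
      have hfx : φ x = x := by linarith [hxeq']
      exact hfx.symm
    have hxq := huniq p hp2 x hx01 hxfix
    have hq0 : 0 ≤ q p := (hq p hp2).1.1
    have hqa : q p ≤ a := hxq ▸ hxmem.2
    have hqfix := (hq p hp2).2
    have hb2 := hbound (q p) hq0
    have hqb : |q p - t| ≤ 2 * (c0 * (q p) ^ e) * M := by
      have hφq : φ (q p) = q p := hqfix.symm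
      rw [hφq] at hb2; exact hb2
    refine hqb.trans ?_
    rw [hDp]
    have hmono : (q p) ^ e ≤ a ^ e := Real.rpow_le_rpow hq0 hqa he.le
    have hqe : 0 ≤ (q p) ^ e := Real.rpow_nonneg hq0 _
    nlinarith [mul_le_mul_of_nonneg_right (mul_le_mul_of_nonneg_left hmono hc0) hM0]
  have hlower : Filter.Tendsto (fun p => t - D p) Filter.atTop (nhds t) := by
    simpa using tendsto_const_nhds.sub hDtend
  have hupper : Filter.Tendsto (fun p => t + D p) Filter.atTop (nhds t) := by
    simpa using tendsto_const_nhds.add hDtend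
  refine tendsto_of_tendsto_of_tendsto_of_le_of_le' hlower hupper ?_ ?_
  · exact hev.mono fun p hp => by linarith [(abs_le.mp hp).1]
  · exact hev.mono fun p hp => by linarith [(abs_le.mp hp).2]
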